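/- Let $E_0 > 0$, $v > 0$, $W_0 \in \mathbb{C}$ with $W_0 \neq 0$, and let $c, C_1, C_2, \rho, K > 0$. Then there exist $A > 0$ and $h_0 \in (0,1)$, depending only on $c, C_1, C_2, \rho, K$, with the following property: for every $h \in (0,h_0)$, every $E_1 \in \mathbb{C}$, every function $S$ holomorphic on $B(E_1,\rho)$ with $c \le |S'| \le C_1$ and $|S''| \le C_2$ on $B(E_1,\rho)$ and $C_0(E_1;h) = 1$, and every function $g$ holomorphic on $B(E_1,\rho)$ with $|g(E)| \le K h \log(1/h)$ on $B(E_1,\rho)$, the equation $C_0(E;h)\,(1 + g(E)) = 1$ has a solution $E$ with $|E - E_1| \le A h^2 \log(1/h)$. -/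

import Mathlib

set_option maxHeartbeats 2000000


/-- Rouché-type approximation of resonances by pseudo-resonances: there exist `A > 0` and
`h₀ ∈ (0,1)` depending only on `c, C₁, C₂, ρ, K` such that if `S` is holomorphic on `B(E₁,ρ)`
with `c ≤ |S'| ≤ C₁`, `|S''| ≤ C₂` there, `C₀(E₁;h) = 1`, and `g` is holomorphic on `B(E₁,ρ)`
with `|g| ≤ K h log(1/h)`, then `C₀(E;h)(1 + g(E)) = 1` has a solution `E` with
`|E - E₁| ≤ A h² log(1/h)`. -/
theorem stmt_7 (E0 v : ℝ) (hE0 : 0 < E0) (hv : 0 < v)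
    (W0 : ℂ) (hW0 : W0 ≠ 0) (c C1 C2 ρ K : ℝ)
    (hc : 0 < c) (hC1 : 0 < C1) (hC2 : 0 < C2) (hρ : 0 < ρ) (hK : 0 < K) :
    ∃ A > 0, ∃ h0 ∈ Set.Ioo (0:ℝ) 1, ∀ h : ℝ, h ∈ Set.Ioo 0 h0 →
      ∀ E1 : ℂ, ∀ S g : ℂ → ℂ,
      DifferentiableOn ℂ S (Metric.ball E1 ρ) →
      (∀ E ∈ Metric.ball E1 ρ, c ≤ ‖deriv S E‖ ∧ ‖deriv S E‖ ≤ C1) →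
      (∀ E ∈ Metric.ball E1 ρ, ‖deriv (deriv S) E‖ ≤ C2) →
      Complex.I * h * Real.pi * W0 * Complex.exp (Complex.I * S E1 / h) / (v * Real.sqrt E0)
        = 1 →
      DifferentiableOn ℂ g (Metric.ball E1 ρ) →
      (∀ E ∈ Metric.ball E1 ρ, ‖g E‖ ≤ K * h * Real.log (1 / h)) →
      ∃ E : ℂ, ‖E - E1‖ ≤ A * h ^ 2 * Real.log (1 / h) ∧
        Complex.I * h * Real.pi * W0 * Complex.exp (Complex.I * S E / h) /
          (v * Real.sqrt E0) * (1 + g E) = 1 := by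
  have hA : (0:ℝ) < 20 * K / c := by positivity
  set A : ℝ := 20 * K / c with hAdef
  clear_value A
  have hAne : A ≠ 0 := ne_of_gt hA
  set δ : ℝ := min (min (ρ / (4 * A)) (c / (4 * C2 * A))) (1 / (4 * A * (C1 + c))) with hδdef
  have hδpos : 0 < δ :=
    lt_min (lt_min (by positivity) (by positivity)) (by positivity)
  have hδ1 : δ ≤ ρ/(4*A) := (min_le_left _ _).trans (min_le_left _ _)
  have hδ2 : δ ≤ c/(4*C2*A) := (min_le_left _ _).trans (min_le_right _ _)
  have hδ3 : δ ≤ 1/(4*A*(C1+c)) := min_le_right _ _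
  clear_value δ
  refine ⟨A, hA, min (1/2) (δ^2),
    ⟨lt_min (by norm_num) (by positivity), lt_of_le_of_lt (min_le_left _ _) (by norm_num)⟩, ?_⟩
  rintro h ⟨hh0, hh1⟩ E1 S g hS hS1 hS2 hC0 hg hgb
  have hh2 : h < 1/2 := lt_of_lt_of_le hh1 (min_le_left _ _)
  have hhδ : h < δ^2 := lt_of_lt_of_le hh1 (min_le_right _ _)
  have hh1' : h < 1 := by linarith
  set L : ℝ := Real.log (1/h) with hLdef
  have hLpos : 0 < L := Real.log_pos (by rw [lt_div_iff₀ hh0]; linarith)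
  -- elementary bounds on h * L
  have hsqrtpos : 0 < Real.sqrt h := Real.sqrt_pos.mpr hh0
  have hsqrt : Real.sqrt h ≤ δ := by
    have := Real.sqrt_le_sqrt hhδ.le
    rwa [Real.sqrt_sq hδpos.le] at this
  have hLle : L ≤ 2 / Real.sqrt h := by
    have h1 : (1:ℝ)/h = (1/Real.sqrt h)^2 := by
      rw [div_pow, one_pow, Real.sq_sqrt hh0.le]
    have h2 : L = 2 * Real.log (1/Real.sqrt h) := by
      rw [hLdef, h1, Real.log_pow]; push_cast; ring
    have h3 : Real.log (1/Real.sqrt h) ≤ 1/Real.sqrt h :=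
      (Real.log_le_sub_one_of_pos (by positivity)).trans (by linarith)
    rw [h2, div_eq_mul_one_div 2]
    exact mul_le_mul_of_nonneg_left h3 (by norm_num)
  have hhL : h * L ≤ 2 * Real.sqrt h := by
    have h4 : h * (2 / Real.sqrt h) = 2 * Real.sqrt h := by
      rw [mul_div_assoc', mul_comm h 2, mul_div_assoc, Real.div_sqrt]
    calc h * L ≤ h * (2 / Real.sqrt h) := mul_le_mul_of_nonneg_left hLle hh0.le
      _ = 2 * Real.sqrt h := h4
  have hhL2 : h * L ≤ 2 * δ := hhL.trans (by linarith)
  set r : ℝ := A * h^2 * L with hrdef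
  clear_value r
  have hrpos : 0 < r := by
    rw [hrdef]
    exact mul_pos (mul_pos hA (pow_pos hh0 2)) hLpos
  have hr3 : r ≤ 2 * A * δ := by
    have e1 : r = A * (h*L) * h := by rw [hrdef]; ring
    nlinarith [mul_le_mul_of_nonneg_left hhL2 hA.le,
      mul_nonneg (mul_nonneg hA.le (by linarith : (0:ℝ) ≤ 2*δ)) (by linarith : (0:ℝ) ≤ 1 - h)]
  have cond1 : r ≤ ρ/2 := by
    have e1 : 2*A*(ρ/(4*A)) = ρ/2 := by field_simp; ring
    nlinarith [mul_le_mul_of_nonneg_left hδ1 (by positivity : (0:ℝ) ≤ 2*A)]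
  have cond2 : C2 * r ≤ c/2 := by
    have e1 : C2*(2*A*(c/(4*C2*A))) = c/2 := by field_simp; ring
    nlinarith [mul_le_mul_of_nonneg_left hδ2 (by positivity : (0:ℝ) ≤ 2*A),
      mul_le_mul_of_nonneg_left hr3 hC2.le]
  have cond3 : (C1 + c) * r ≤ h/2 := by
    have hAhL : A * (h*L) ≤ 1/(2*(C1+c)) := by
      have e3 : A*(2*(1/(4*A*(C1+c)))) = 1/(2*(C1+c)) := by
        field_simp
        ring
      nlinarith [mul_le_mul_of_nonneg_left hhL2 hA.le,
        mul_le_mul_of_nonneg_left hδ3 (by positivity : (0:ℝ) ≤ 2*A)]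
    have e4 : (C1+c)*(1/(2*(C1+c))) = 1/2 := by
      field_simp
    have e5 : (C1+c) * r = ((C1+c) * (A*(h*L))) * h := by rw [hrdef]; ring
    rw [e5]
    calc ((C1+c) * (A*(h*L))) * h ≤ ((C1+c) * (1/(2*(C1+c)))) * h := by
          apply mul_le_mul_of_nonneg_right _ hh0.le
          exact mul_le_mul_of_nonneg_left hAhL (by positivity)
      _ = h/2 := by rw [e4]; ring
  -- geometric set-up
  have hrρ : r < ρ := by linarith
  have hsub : Metric.closedBall E1 r ⊆ Metric.ball E1 ρ := Metric.closedBall_subset_ball hrρ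
  have hE1ρ : E1 ∈ Metric.ball E1 ρ := Metric.mem_ball_self hρ
  have hSanal := hS.analyticOnNhd Metric.isOpen_ball
  have hS'diff : DifferentiableOn ℂ (deriv S) (Metric.ball E1 ρ) :=
    hSanal.deriv.differentiableOn
  have hdAt : ∀ x ∈ Metric.ball E1 ρ, DifferentiableAt ℂ S x :=
    fun x hx => hS.differentiableAt (Metric.isOpen_ball.mem_nhds hx)
  have hd'At : ∀ x ∈ Metric.ball E1 ρ, DifferentiableAt ℂ (deriv S) x :=
    fun x hx => hS'diff.differentiableAt (Metric.isOpen_ball.mem_nhds hx)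
  -- Lipschitz bound for S'
  have hlip : ∀ E ∈ Metric.closedBall E1 r, ‖deriv S E - deriv S E1‖ ≤ C2 * r := by
    intro E hE
    have h1 := Convex.norm_image_sub_le_of_norm_deriv_le hd'At
      (fun x hx => by simpa using hS2 x hx)
      (convex_ball E1 ρ) hE1ρ (hsub hE)
    have h2 : ‖E - E1‖ ≤ r := by
      rw [← dist_eq_norm]; exact Metric.mem_closedBall.mp hE
    calc ‖deriv S E - deriv S E1‖ ≤ C2 * ‖E - E1‖ := h1
      _ ≤ C2 * r := mul_le_mul_of_nonneg_left h2 hC2.le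
  -- Taylor bound for S
  have htay : ∀ E ∈ Metric.closedBall E1 r,
      ‖S E - S E1 - deriv S E1 * (E - E1)‖ ≤ C2 * r * r := by
    intro E hE
    have hmem1 : E1 ∈ Metric.closedBall E1 r := Metric.mem_closedBall_self hrpos.le
    have hd2 : ∀ x : ℂ, HasDerivAt (fun w : ℂ => deriv S E1 * w) (deriv S E1) x := by
      intro x
      simpa using (hasDerivAt_id x).const_mul (deriv S E1)
    have hdiffφ : ∀ x ∈ Metric.closedBall E1 r,
        DifferentiableAt ℂ (fun w => S w - deriv S E1 * w) x :=
      fun x hx => (hdAt x (hsub hx)).sub (hd2 x).differentiableAt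
    have hbdφ : ∀ x ∈ Metric.closedBall E1 r,
        ‖deriv (fun w => S w - deriv S E1 * w) x‖ ≤ C2 * r := by
      intro x hx
      have hder : deriv (fun w => S w - deriv S E1 * w) x = deriv S x - deriv S E1 := by
        rw [deriv_fun_sub (hdAt x (hsub hx)) (hd2 x).differentiableAt, (hd2 x).deriv]
      rw [hder]; exact hlip x hx
    have h1 := Convex.norm_image_sub_le_of_norm_deriv_le hdiffφ hbdφ
      (convex_closedBall E1 r) hmem1 hE
    have h2 : ‖E - E1‖ ≤ r := by
      rw [← dist_eq_norm]; exact Metric.mem_closedBall.mp hE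
    have heq : S E - deriv S E1 * E - (S E1 - deriv S E1 * E1)
        = S E - S E1 - deriv S E1 * (E - E1) := by ring
    rw [heq] at h1
    calc ‖S E - S E1 - deriv S E1 * (E - E1)‖ ≤ C2 * r * ‖E - E1‖ := h1
      _ ≤ C2 * r * r := mul_le_mul_of_nonneg_left h2 (by positivity)
  -- bounds on |S E - S E1|
  have hupp : ∀ E ∈ Metric.closedBall E1 r, ‖S E - S E1‖ ≤ h/2 := by
    intro E hE
    have h2 : ‖E - E1‖ ≤ r := by
      rw [← Complex.dist_eq]; exact Metric.mem_closedBall.mp hE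
    have h3 : ‖deriv S E1 * (E - E1)‖ ≤ C1 * r := by
      rw [norm_mul]
      exact mul_le_mul (hS1 E1 hE1ρ).2 h2 (norm_nonneg _) hC1.le
    have h4 : S E - S E1 = (S E - S E1 - deriv S E1 * (E - E1)) + deriv S E1 * (E - E1) := by
      ring
    have h5 := htay E hE
    have h6 : ‖S E - S E1‖ ≤ C2 * r * r + C1 * r := by
      rw [h4]
      exact (norm_add_le _ _).trans (add_le_add h5 h3)
    have h7 : C2 * r * r ≤ (c/2) * r := mul_le_mul_of_nonneg_right cond2 hrpos.le
    nlinarith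
  have hlow : ∀ E ∈ Metric.sphere E1 r, (c/2) * r ≤ ‖S E - S E1‖ := by
    intro E hE
    have h2 : ‖E - E1‖ = r := by
      rw [← Complex.dist_eq]; exact Metric.mem_sphere.mp hE
    have hE' : E ∈ Metric.closedBall E1 r := Metric.sphere_subset_closedBall hE
    have h3 : c * r ≤ ‖deriv S E1 * (E - E1)‖ := by
      rw [norm_mul, h2]
      exact mul_le_mul_of_nonneg_right (hS1 E1 hE1ρ).1 hrpos.le
    have h4 : deriv S E1 * (E - E1)
        = (S E - S E1) + (deriv S E1 * (E - E1) - (S E - S E1)) := by ring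
    have h5 : ‖deriv S E1 * (E - E1) - (S E - S E1)‖
        = ‖S E - S E1 - deriv S E1 * (E - E1)‖ := by
      rw [show deriv S E1 * (E - E1) - (S E - S E1)
          = -(S E - S E1 - deriv S E1 * (E - E1)) by ring, norm_neg]
    have h6 := htay E hE'
    have h7 : ‖deriv S E1 * (E - E1)‖
        ≤ ‖S E - S E1‖ + C2 * r * r := by
      rw [h4]
      refine (norm_add_le _ _).trans ?_
      rw [h5]; exact add_le_add_right h6 _
    have h8 : C2 * r * r ≤ (c/2) * r := mul_le_mul_of_nonneg_right cond2 hrpos.le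
    nlinarith
  -- the factorization C0(E) = exp(i (S E - S E1)/h)
  have hfac : ∀ E : ℂ, Complex.I * h * Real.pi * W0 * Complex.exp (Complex.I * S E / h)
      / (v * Real.sqrt E0) = Complex.exp (Complex.I * (S E - S E1) / h) := by
    intro E
    have h1 : Complex.I * S E / h = Complex.I * S E1 / h + Complex.I * (S E - S E1) / h := by
      ring
    rw [h1, Complex.exp_add]
    calc Complex.I * ↑h * ↑Real.pi * W0 *
          (Complex.exp (Complex.I * S E1 / ↑h) * Complex.exp (Complex.I * (S E - S E1) / ↑h)) /
          (↑v * ↑(Real.sqrt E0))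
        = (Complex.I * ↑h * ↑Real.pi * W0 * Complex.exp (Complex.I * S E1 / ↑h) /
          (↑v * ↑(Real.sqrt E0))) * Complex.exp (Complex.I * (S E - S E1) / ↑h) := by ring
      _ = Complex.exp (Complex.I * (S E - S E1) / ↑h) := by rw [hC0]; ring
  -- modulus of the exponent
  have hzabs : ∀ E : ℂ, ‖Complex.I * (S E - S E1) / h‖
      = ‖S E - S E1‖ / h := by
    intro E
    rw [norm_div, norm_mul, Complex.norm_I, one_mul, Complex.norm_real, Real.norm_eq_abs, abs_of_pos hh0]
  have hz_le : ∀ E ∈ Metric.closedBall E1 r,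
      ‖Complex.I * (S E - S E1) / h‖ ≤ 1/2 := by
    intro E hE
    rw [hzabs E, div_le_iff₀ hh0]
    have := hupp E hE
    linarith
  have hcA : (c/2) * r = 10 * K * h^2 * L := by
    rw [hrdef, hAdef]; field_simp; ring
  have hz_ge : ∀ E ∈ Metric.sphere E1 r,
      10 * (K * h * L) ≤ ‖Complex.I * (S E - S E1) / h‖ := by
    intro E hE
    rw [hzabs E, le_div_iff₀ hh0]
    have h1 := hlow E hE
    nlinarith
  -- lower bound for |F| on the sphere
  have hbound : ∀ E ∈ Metric.sphere E1 r,
      2 * (K * h * L) ≤ ‖Complex.I * h * Real.pi * W0 *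
        Complex.exp (Complex.I * S E / h) / (v * Real.sqrt E0) * (1 + g E) - 1‖ := by
    intro E hE
    have hE' : E ∈ Metric.closedBall E1 r := Metric.sphere_subset_closedBall hE
    set z : ℂ := Complex.I * (S E - S E1) / h with hzdef
    have hz1 : ‖z‖ ≤ 1/2 := hz_le E hE'
    have hz2 : 10 * (K * h * L) ≤ ‖z‖ := hz_ge E hE
    -- |exp z - 1| ≥ |z|/2
    have he1 := Complex.norm_exp_sub_one_sub_id_le (x := z) (by linarith)
    have he2 : ‖z‖ ≤ ‖Complex.exp z - 1‖ + ‖z‖ ^ 2 := by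
      have : z = (Complex.exp z - 1) - (Complex.exp z - 1 - z) := by ring
      calc ‖z‖ = ‖(Complex.exp z - 1) - (Complex.exp z - 1 - z)‖ := by
            rw [← this]
        _ ≤ ‖Complex.exp z - 1‖ + ‖Complex.exp z - 1 - z‖ :=
            norm_sub_le _ _
        _ ≤ ‖Complex.exp z - 1‖ + ‖z‖ ^ 2 := by linarith
    have he3 : ‖z‖ / 2 ≤ ‖Complex.exp z - 1‖ := by
      have hsq : ‖z‖ ^ 2 ≤ ‖z‖ * (1/2) := by
        rw [sq]
        exact mul_le_mul_of_nonneg_left hz1 (norm_nonneg z)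
      linarith
    -- |exp z| ≤ 3
    have he4 : ‖Complex.exp z‖ ≤ 3 := by
      rw [Complex.norm_exp]
      have h6 : z.re ≤ 1 := (Complex.re_le_norm z).trans (by linarith)
      calc Real.exp z.re ≤ Real.exp 1 := Real.exp_le_exp.mpr h6
        _ ≤ 3 := by
            have := Real.exp_one_lt_d9
            linarith
    have hgE : ‖g E‖ ≤ K * h * L := hgb E (hsub hE')
    have he5 : ‖Complex.exp z * g E‖ ≤ 3 * (K * h * L) := by
      rw [norm_mul]
      exact mul_le_mul he4 hgE (norm_nonneg _) (by norm_num)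
    have hFeq : Complex.I * h * Real.pi * W0 * Complex.exp (Complex.I * S E / h) /
        (v * Real.sqrt E0) * (1 + g E) - 1
        = (Complex.exp z - 1) + Complex.exp z * g E := by
      rw [hfac E, hzdef]; ring
    rw [hFeq]
    have he6 : ‖Complex.exp z - 1‖
        ≤ ‖(Complex.exp z - 1) + Complex.exp z * g E‖
          + ‖Complex.exp z * g E‖ := by
      have : Complex.exp z - 1 = ((Complex.exp z - 1) + Complex.exp z * g E)
          - Complex.exp z * g E := by ring
      calc ‖Complex.exp z - 1‖
          = ‖((Complex.exp z - 1) + Complex.exp z * g E) - Complex.exp z * g E‖ := by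
            rw [← this]
        _ ≤ _ := norm_sub_le _ _
    nlinarith
  -- conclude by the minimum modulus principle (contradiction)
  by_contra hcon
  push_neg at hcon
  set F : ℂ → ℂ := fun E => Complex.I * h * Real.pi * W0 * Complex.exp (Complex.I * S E / h) /
    (v * Real.sqrt E0) * (1 + g E) - 1 with hFdef
  clear_value F
  have hFne : ∀ E ∈ Metric.closedBall E1 r, F E ≠ 0 := by
    intro E hE hzero
    have h2 : ‖E - E1‖ ≤ r := by
      rw [← Complex.dist_eq]; exact Metric.mem_closedBall.mp hE
    rw [hFdef] at hzero
    simp only [sub_eq_zero] at hzero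
    exact hcon E h2 hzero
  have hFdiff : DifferentiableOn ℂ F (Metric.ball E1 ρ) := by
    rw [hFdef]
    have hlin : DifferentiableOn ℂ (fun E => Complex.I * S E / (h:ℂ)) (Metric.ball E1 ρ) :=
      (hS.const_mul Complex.I).div_const _
    exact ((((hlin.cexp).const_mul (Complex.I * (h:ℂ) * (Real.pi:ℂ) * W0)).div_const
      ((v:ℂ) * ((Real.sqrt E0 : ℝ):ℂ))).mul ((differentiableOn_const 1).add hg)).sub_const 1
  have hG : DiffContOnCl ℂ (fun E => (F E)⁻¹) (Metric.ball E1 r) := by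
    apply DifferentiableOn.diffContOnCl
    rw [closure_ball E1 hrpos.ne']
    exact (hFdiff.mono hsub).inv hFne
  have hKhL : 0 < K * h * L := mul_pos (mul_pos hK hh0) hLpos
  have hfront : ∀ z ∈ frontier (Metric.ball E1 r), ‖(F z)⁻¹‖ ≤ (2*(K*h*L))⁻¹ := by
    intro z hz
    rw [frontier_ball E1 hrpos.ne'] at hz
    rw [hFdef]
    simp only [norm_inv]
    exact inv_anti₀ (by linarith) (hbound z hz)
  have hE1cl : E1 ∈ closure (Metric.ball E1 r) := by
    rw [closure_ball E1 hrpos.ne']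
    exact Metric.mem_closedBall_self hrpos.le
  have hmax := Complex.norm_le_of_forall_mem_frontier_norm_le Metric.isBounded_ball hG
    hfront hE1cl
  rw [norm_inv] at hmax
  have hFE1 : F E1 = g E1 := by
    rw [hFdef]
    simp only [hC0]
    ring
  have hFE1pos : 0 < ‖F E1‖ :=
    norm_pos_iff.mpr (hFne E1 (Metric.mem_closedBall_self hrpos.le))
  have h9 : 2*(K*h*L) ≤ ‖F E1‖ :=
    (inv_le_inv₀ hFE1pos (by linarith)).mp hmax
  have h10 : ‖F E1‖ ≤ K*h*L := by
    rw [hFE1]; exact hgb E1 hE1ρ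
  nlinarith
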